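/- Let f, g be finite Laurent polynomials with real coefficients, nonzero leading and trailing coefficients, and no zeros on the unit circle, such that the winding numbers of k ↦ f(e^{ik}) and k ↦ g(e^{ik}) around the origin differ: w(f) ≠ w(g). Then for any continuous path t ↦ h_t (t ∈ [0,1]) of real Laurent polynomials of uniformly bounded degree with h_0 = f and h_1 = g, there exists t* ∈ [0,1] such that h_{t*} has a zero on the unit circle. -/

import Mathlib

open Complex

/-- A Laurent polynomial with complex coefficients `a` supported on `s`. -/
noncomputable def stmt19L (s : Finset ℤ) (a : ℤ → ℂ) (z : ℂ) : ℂ := ∑ α ∈ s, a α * z ^ α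

/-- Its formal derivative. -/
noncomputable def stmt19Ld (s : Finset ℤ) (a : ℤ → ℂ) (z : ℂ) : ℂ := ∑ α ∈ s, a α * ((α : ℂ) * z ^ (α - 1))

lemma stmt19_hasDerivAt (s : Finset ℤ) (a : ℤ → ℂ) {z : ℂ} (hz : z ≠ 0) :
    HasDerivAt (stmt19L s a) (stmt19Ld s a z) z := by
  unfold stmt19L stmt19Ld
  exact HasDerivAt.fun_sum (fun α (_ : α ∈ s) => (hasDerivAt_zpow α z (Or.inl hz)).const_mul (a α))

lemma stmt19_circle_eq (s : Finset ℤ) (a : ℤ → ℂ) :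
    (∮ z in C(0, 1), deriv (stmt19L s a) z / stmt19L s a z)
      = ∫ θ in (0:ℝ)..(2 * Real.pi), (circleMap 0 1 θ * I) *
          (stmt19Ld s a (circleMap 0 1 θ) / stmt19L s a (circleMap 0 1 θ)) := by
  simp only [circleIntegral, deriv_circleMap, smul_eq_mul]
  refine intervalIntegral.integral_congr fun θ _ => ?_
  rw [(stmt19_hasDerivAt s a (circleMap_ne_center one_ne_zero)).deriv]

lemma stmt19_contL (s : Finset ℤ) (a : ℤ → ℂ) :
    Continuous fun θ : ℝ => stmt19L s a (circleMap 0 1 θ) := by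
  simp only [stmt19L]
  exact continuous_finset_sum _ fun α _ => continuous_const.mul
    ((continuous_circleMap 0 1).zpow₀ α fun θ => Or.inl (circleMap_ne_center one_ne_zero))

lemma stmt19_contLd (s : Finset ℤ) (a : ℤ → ℂ) :
    Continuous fun θ : ℝ => stmt19Ld s a (circleMap 0 1 θ) := by
  simp only [stmt19Ld]
  exact continuous_finset_sum _ fun α _ => continuous_const.mul (continuous_const.mul
    ((continuous_circleMap 0 1).zpow₀ (α - 1) fun θ => Or.inl (circleMap_ne_center one_ne_zero)))

/-- Integrality of the winding integral: if the Laurent polynomial does not vanish on the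
unit circle, then `∮ L'/L` is `2πi` times an integer. -/
lemma stmt19_integrality (s : Finset ℤ) (a : ℤ → ℂ)
    (h0 : ∀ θ : ℝ, stmt19L s a (circleMap 0 1 θ) ≠ 0) :
    ∃ n : ℤ, (∫ θ in (0:ℝ)..(2 * Real.pi), (circleMap 0 1 θ * I) *
        (stmt19Ld s a (circleMap 0 1 θ) / stmt19L s a (circleMap 0 1 θ)))
      = n * (2 * Real.pi * I) := by
  set ψ : ℝ → ℂ := fun θ => (circleMap 0 1 θ * I) *
    (stmt19Ld s a (circleMap 0 1 θ) / stmt19L s a (circleMap 0 1 θ)) with hψdef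
  have hψ : Continuous ψ :=
    ((continuous_circleMap 0 1).mul continuous_const).mul
      ((stmt19_contLd s a).div (stmt19_contL s a) h0)
  set q : ℝ → ℂ := fun x => ∫ θ in (0:ℝ)..x, ψ θ with hqdef
  have hq : ∀ x, HasDerivAt q (ψ x) x := fun x =>
    (hψ.integral_hasStrictDerivAt 0 x).hasDerivAt
  set u : ℝ → ℂ := fun x => stmt19L s a (circleMap 0 1 x) * Complex.exp (-q x) with hudef
  have hu : ∀ x, HasDerivAt u 0 x := by
    intro x
    have h1 : HasDerivAt (fun x : ℝ => stmt19L s a (circleMap 0 1 x))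
        (stmt19Ld s a (circleMap 0 1 x) * (circleMap 0 1 x * I)) x :=
      (stmt19_hasDerivAt s a (circleMap_ne_center one_ne_zero)).comp x
        (hasDerivAt_circleMap 0 1 x)
    have h2 : HasDerivAt (fun x : ℝ => Complex.exp (-q x))
        (Complex.exp (-q x) * (-ψ x)) x := ((hq x).neg).cexp
    have h3 := h1.mul h2
    refine h3.congr_deriv ?_
    have hL := h0 x
    simp only [hψdef]
    field_simp
    ring
  have hconst : u (2 * Real.pi) = u 0 :=
    is_const_of_deriv_eq_zero (fun x => (hu x).differentiableAt)
      (fun x => (hu x).deriv) _ _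
  have hcm0 : circleMap 0 1 0 = 1 := by simp [circleMap]
  have hcm2π : circleMap 0 1 (2 * Real.pi) = 1 := by
    simp only [circleMap_zero]
    push_cast
    rw [Complex.exp_two_pi_mul_I]
    ring
  have hq0 : q 0 = 0 := intervalIntegral.integral_same
  rw [hudef] at hconst
  simp only [hcm0, hcm2π, hq0, neg_zero, Complex.exp_zero, mul_one] at hconst
  have hL1 : stmt19L s a 1 ≠ 0 := by have := h0 0; rwa [hcm0] at this
  have hexp : Complex.exp (-q (2 * Real.pi)) = 1 := mul_left_cancel₀ hL1 (hconst.trans (mul_one _).symm)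
  have hexp' : Complex.exp (q (2 * Real.pi)) = 1 := by
    have := congrArg (· * Complex.exp (q (2 * Real.pi))) hexp
    simpa [← Complex.exp_add] using this.symm
  obtain ⟨n, hn⟩ := Complex.exp_eq_one_iff.mp hexp'
  exact ⟨n, hn⟩

/-- **Different winding numbers force a gap closing along any path.**
Let `τ ↦ h_τ`, `h_τ(z) = Σ_{α∈s} t(τ,α) z^α`, be a path of real Laurent polynomials of
uniformly bounded degree (fixed finite support `s`, coefficients continuous in `τ`).
Suppose the endpoints `h₀ = f` and `h₁ = g` have no zeros on the unit circle and their
winding numbers `w(h) = (2πi)⁻¹ ∮_{|z|=1} h'/h` around the origin differ.  Then some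
`h_{τ*}`, `τ* ∈ [0,1]`, has a zero on the unit circle. -/
theorem stmt19 (s : Finset ℤ) (t : ℝ → ℤ → ℝ)
    (htcont : ∀ α ∈ s, Continuous fun τ : ℝ => t τ α)
    (F : ℝ → ℂ → ℂ)
    (hF : ∀ (τ : ℝ) (z : ℂ), F τ z = ∑ α ∈ s, ((t τ α : ℝ) : ℂ) * z ^ α)
    (hf : ∀ z : ℂ, ‖z‖ = 1 → F 0 z ≠ 0)
    (hg : ∀ z : ℂ, ‖z‖ = 1 → F 1 z ≠ 0)
    (hw : (2 * Real.pi * Complex.I)⁻¹ * (∮ z in C(0, 1), deriv (F 0) z / F 0 z)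
        ≠ (2 * Real.pi * Complex.I)⁻¹ * (∮ z in C(0, 1), deriv (F 1) z / F 1 z)) :
    ∃ τ ∈ Set.Icc (0 : ℝ) 1, ∃ z : ℂ, ‖z‖ = 1 ∧ F τ z = 0 := by
  by_contra hcon
  push_neg at hcon
  -- clamp the parameter to `[0,1]`
  set c : ℝ → ℝ := fun τ => max 0 (min 1 τ) with hcdef
  have hcmem : ∀ τ, c τ ∈ Set.Icc (0:ℝ) 1 :=
    fun τ => ⟨le_max_left _ _, max_le zero_le_one (min_le_left _ _)⟩
  have hccont : Continuous c := continuous_const.max (continuous_const.min continuous_id)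
  have hc0 : c 0 = 0 := by norm_num [hcdef]
  have hc1 : c 1 = 1 := by norm_num [hcdef]
  set a : ℝ → ℤ → ℂ := fun τ α => ((t (c τ) α : ℝ) : ℂ) with hadef
  have hFa : ∀ τ z, F (c τ) z = stmt19L s (a τ) z := by
    intro τ z; rw [hF]; rfl
  have hne : ∀ τ θ : ℝ, stmt19L s (a τ) (circleMap 0 1 θ) ≠ 0 := by
    intro τ θ
    rw [← hFa]
    exact hcon (c τ) (hcmem τ) _ (by simp [norm_circleMap_zero])
  set W : ℝ → ℂ := fun τ => ∫ θ in (0:ℝ)..(2 * Real.pi), (circleMap 0 1 θ * I) *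
    (stmt19Ld s (a τ) (circleMap 0 1 θ) / stmt19L s (a τ) (circleMap 0 1 θ)) with hWdef
  -- continuity of `W`
  have hcm : Continuous fun p : ℝ × ℝ => circleMap 0 1 p.2 :=
    (continuous_circleMap 0 1).comp continuous_snd
  have hcmne : ∀ p : ℝ × ℝ, circleMap 0 1 p.2 ≠ 0 :=
    fun p => circleMap_ne_center one_ne_zero
  have hacont : ∀ α ∈ s, Continuous fun p : ℝ × ℝ => a p.1 α := fun α hα =>
    Complex.continuous_ofReal.comp ((htcont α hα).comp (hccont.comp continuous_fst))
  have hLcont : Continuous fun p : ℝ × ℝ => stmt19L s (a p.1) (circleMap 0 1 p.2) := by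
    simp only [stmt19L]
    exact continuous_finset_sum _ fun α hα => (hacont α hα).mul
      (hcm.zpow₀ α fun p => Or.inl (hcmne p))
  have hLdcont : Continuous fun p : ℝ × ℝ => stmt19Ld s (a p.1) (circleMap 0 1 p.2) := by
    simp only [stmt19Ld]
    exact continuous_finset_sum _ fun α hα => (hacont α hα).mul
      (continuous_const.mul (hcm.zpow₀ (α - 1) fun p => Or.inl (hcmne p)))
  have hWcont : Continuous W := by
    apply intervalIntegral.continuous_parametric_intervalIntegral_of_continuous'
    exact (hcm.mul continuous_const).mul
      (hLdcont.div hLcont fun p => hne p.1 p.2)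
  -- integrality
  have hint : ∀ τ, ∃ n : ℤ, W τ = n * (2 * Real.pi * I) :=
    fun τ => stmt19_integrality s (a τ) (hne τ)
  choose k hk using hint
  -- identify circle integrals
  have hWcirc : ∀ τ : ℝ, (∮ z in C(0, 1), deriv (F (c τ)) z / F (c τ) z) = W τ := by
    intro τ
    have hFeq : F (c τ) = stmt19L s (a τ) := funext fun z => hFa τ z
    rw [hFeq, stmt19_circle_eq]
  have e0 : (∮ z in C(0, 1), deriv (F 0) z / F 0 z) = W 0 := by
    have := hWcirc 0; rwa [hc0] at this
  have e1 : (∮ z in C(0, 1), deriv (F 1) z / F 1 z) = W 1 := by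
    have := hWcirc 1; rwa [hc1] at this
  rw [e0, e1] at hw
  have h2πI : (2 * (Real.pi : ℂ) * Complex.I) ≠ 0 :=
    mul_ne_zero (mul_ne_zero two_ne_zero (Complex.ofReal_ne_zero.mpr Real.pi_ne_zero))
      Complex.I_ne_zero
  have hval : ∀ τ, (2 * (Real.pi : ℂ) * Complex.I)⁻¹ * W τ = (k τ : ℂ) := by
    intro τ
    rw [hk τ]
    field_simp
  have hkne : k 0 ≠ k 1 := by
    intro h
    exact hw (by rw [hval 0, hval 1, h])
  set r : ℝ → ℝ := fun τ => ((2 * (Real.pi : ℂ) * Complex.I)⁻¹ * W τ).re with hrdef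
  have hrcont : Continuous r := Complex.continuous_re.comp (continuous_const.mul hWcont)
  have hr : ∀ τ, r τ = (k τ : ℝ) := by
    intro τ
    rw [hrdef]
    simp only [hval τ]
    exact Complex.intCast_re (k τ)
  rcases hkne.lt_or_gt with h | h
  · have hgap : (k 0 : ℝ) + 1 ≤ (k 1 : ℝ) := by exact_mod_cast Int.add_one_le_iff.mpr h
    have hmem : ((k 0 : ℝ) + 1/2) ∈ Set.Icc (r 0) (r 1) := by
      rw [hr 0, hr 1]
      constructor <;> linarith
    obtain ⟨τ, hτmem, hτval⟩ :=
      intermediate_value_Icc zero_le_one hrcont.continuousOn hmem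
    have hkτ : (k τ : ℝ) = (k 0 : ℝ) + 1/2 := by rw [← hr τ]; exact hτval
    have h2 : (2 * k τ : ℤ) = 2 * k 0 + 1 := by
      have : ((2 * k τ : ℤ) : ℝ) = ((2 * k 0 + 1 : ℤ) : ℝ) := by push_cast; linarith
      exact_mod_cast this
    omega
  · have hgap : (k 1 : ℝ) + 1 ≤ (k 0 : ℝ) := by exact_mod_cast Int.add_one_le_iff.mpr h
    have hmem : ((k 1 : ℝ) + 1/2) ∈ Set.Icc (r 1) (r 0) := by
      rw [hr 0, hr 1]
      constructor <;> linarith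
    obtain ⟨τ, hτmem, hτval⟩ :=
      intermediate_value_Icc' zero_le_one hrcont.continuousOn hmem
    have hkτ : (k τ : ℝ) = (k 1 : ℝ) + 1/2 := by rw [← hr τ]; exact hτval
    have h2 : (2 * k τ : ℤ) = 2 * k 1 + 1 := by
      have : ((2 * k τ : ℤ) : ℝ) = ((2 * k 1 + 1 : ℤ) : ℝ) := by push_cast; linarith
      exact_mod_cast this
    omega
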